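/- Fix n ∈ ℕ and let M(·,t) be a computable nondecreasing-in-t approximation of M from below. Define z inductively: start with z = ε; while there exist t and b with M(zb,t) > 2^{-n}, replace z by z¬b for the first such (t,b). Then this process terminates after finitely many steps, and the resulting z satisfies M(z0) + M(z1) ≤ 2^{1−n}. -/

import Mathlib

open Filter ENNReal

/-- Finite binary strings. -/
abbrev BStr := List Bool

/-- A recursively enumerable set of program/output pairs. -/
def RECoded (L : Set (BStr × BStr)) : Prop :=
  ∃ f : ℕ → Option (BStr × BStr), Computable f ∧ L = {x | ∃ n, f n = some x}

/-- A set of strings is prefix-free if no element is a proper prefix of another. -/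
def PrefixFreeSet (S : Set BStr) : Prop :=
  ∀ p ∈ S, ∀ q ∈ S, p <+: q → p = q

/-- A prefix machine: r.e. set of pairs whose programs form a prefix-free set. -/
def PrefixMachine (L : Set (BStr × BStr)) : Prop :=
  RECoded L ∧ PrefixFreeSet {p | ∃ y, (p, y) ∈ L}

/-- A monotone machine. -/
def MonotoneMachine (L : Set (BStr × BStr)) : Prop :=
  RECoded L ∧ ∀ p y q x, (p, y) ∈ L → (q, x) ∈ L → y.length ≤ x.length → p <+: q → y <+: x

/-- `y ∈ L(p)` for a monotone machine `L`. -/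
def MonOut (L : Set (BStr × BStr)) (p y : BStr) : Prop :=
  (∃ x, (p, x) ∈ L ∧ y <+: x) ∧ ∀ q z, (q, z) ∈ L → q <+: p → q ≠ p → ¬ y <+: z

/-- `λ_L(y) = Σ_{p : (p,y) ∈ L} 2^{-ℓ(p)}` for a prefix machine. -/
noncomputable def lamP (L : Set (BStr × BStr)) (y : BStr) : ℝ≥0∞ :=
  ∑' p : {p : BStr // (p, y) ∈ L}, (2 : ℝ≥0∞)⁻¹ ^ (p : BStr).length

/-- `M_L(y) = Σ_{p : y ∈ L(p)} 2^{-ℓ(p)}` for a monotone machine. -/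
noncomputable def MM (L : Set (BStr × BStr)) (y : BStr) : ℝ≥0∞ :=
  ∑' p : {p : BStr // MonOut L p y}, (2 : ℝ≥0∞)⁻¹ ^ (p : BStr).length

/-- A universal prefix machine: `(p,y) ∈ L ↔ (i'p, y) ∈ U` for some prefix code `i'` of `L`. -/
def IsUniversalPrefix (U : Set (BStr × BStr)) : Prop :=
  PrefixMachine U ∧ ∀ L, PrefixMachine L → ∃ ip : BStr,
    ∀ p y, ((p, y) ∈ L ↔ (ip ++ p, y) ∈ U)

/-- A universal monotone machine. -/
def IsUniversalMonotone (U : Set (BStr × BStr)) : Prop :=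
  MonotoneMachine U ∧ ∀ L, MonotoneMachine L → ∃ ip : BStr,
    ∀ p y, ((p, y) ∈ L ↔ (ip ++ p, y) ∈ U)

/-- Prefix Kolmogorov complexity w.r.t. a (universal) prefix machine `U`. -/
noncomputable def Kc (U : Set (BStr × BStr)) (y : BStr) : ℕ :=
  sInf {n | ∃ p : BStr, (p, y) ∈ U ∧ p.length = n}

/-- Complexity of a natural number via its binary representation. -/
noncomputable def KNat (U : Set (BStr × BStr)) (n : ℕ) : ℕ := Kc U (Nat.bits n)

/-- The first `n` bits of an infinite binary string. -/
def pre (ω : ℕ → Bool) (n : ℕ) : BStr := (List.range n).map ω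

open Classical in
/-- One step of the flip-the-predicted-bit process with threshold 2^{-n}: if for some
(t,b) (coded by k, first k taken) the approximation of M at zb exceeds 2^{-n}, extend
z by ¬b, else stop. -/
noncomputable def pstep (Mt : BStr → ℕ → ℚ) (n : ℕ) (z : BStr) : BStr :=
  if h : ∃ k : ℕ, ((2 : ℚ) ^ n)⁻¹ < Mt (z ++ [decide (k % 2 = 1)]) (k / 2) then
    z ++ [!(decide (Nat.find h % 2 = 1))]
  else z


namespace FlipAux

noncomputable def dy : BStr → ℝ
  | [] => 0
  | b :: s => (cond b (2⁻¹ : ℝ) 0) + dy s / 2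

lemma dy_nil : dy [] = 0 := rfl
lemma dy_cons (c : Bool) (s : BStr) : dy (c :: s) = (cond c (2⁻¹ : ℝ) 0) + dy s / 2 := rfl

def Iv (p : BStr) : Set ℝ := Set.Ico (dy p) (dy p + (2⁻¹ : ℝ) ^ p.length)

lemma dy_append (p : BStr) (b : Bool) :
    dy (p ++ [b]) = dy p + (cond b 1 0) * (2⁻¹ : ℝ) ^ (p.length + 1) := by
  induction p with
  | nil => cases b <;> simp [dy_nil, dy_cons] <;> norm_num
  | cons c s ih =>
      rw [List.cons_append, dy_cons, ih, dy_cons, List.length_cons]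
      ring

lemma Iv_append_subset (p : BStr) (b : Bool) : Iv (p ++ [b]) ⊆ Iv p := by
  have h0 : (0:ℝ) ≤ cond b 1 0 := by cases b <;> norm_num
  have h1 : (cond b (1:ℝ) 0) ≤ 1 := by cases b <;> norm_num
  have hpos : (0:ℝ) < (2⁻¹:ℝ) ^ (p.length + 1) := by positivity
  have hp : (2⁻¹:ℝ) ^ (p.length + 1) + (2⁻¹:ℝ) ^ (p.length + 1) = (2⁻¹:ℝ) ^ p.length := by
    rw [pow_succ]; ring
  refine Set.Ico_subset_Ico ?_ ?_
  · rw [dy_append]; nlinarith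
  · rw [dy_append, List.length_append]
    simp only [List.length_cons, List.length_nil]
    nlinarith

lemma Iv_append_list (r : BStr) : ∀ p : BStr, Iv (p ++ r) ⊆ Iv p := by
  induction r with
  | nil => intro p; simp
  | cons b r ih =>
      intro p
      have e : p ++ b :: r = (p ++ [b]) ++ r := by simp
      rw [e]
      exact (ih (p ++ [b])).trans (Iv_append_subset p b)

lemma Iv_prefix {p q : BStr} (h : p <+: q) : Iv q ⊆ Iv p := by
  obtain ⟨r, rfl⟩ := h
  exact Iv_append_list r p

lemma Iv_sib (p : BStr) : Disjoint (Iv (p ++ [false])) (Iv (p ++ [true])) := by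
  have e0 : dy (p ++ [false]) = dy p := by simp [dy_append]
  have e1 : dy (p ++ [true]) = dy p + (2⁻¹:ℝ) ^ (p.length + 1) := by simp [dy_append]
  have l : (p ++ [false]).length = p.length + 1 := by simp
  have l' : (p ++ [true]).length = p.length + 1 := by simp
  rw [Iv, Iv, e0, e1, l, l']
  exact Set.Ico_disjoint_Ico_same

lemma exists_split (p : BStr) : ∀ (q : BStr), ¬ p <+: q → ¬ q <+: p →
    ∃ r b, r ++ [b] <+: p ∧ r ++ [!b] <+: q := by
  induction p with
  | nil => intro q h1 _; exact absurd List.nil_prefix h1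
  | cons a p ih =>
      intro q h1 h2
      cases q with
      | nil => exact absurd List.nil_prefix h2
      | cons c q =>
          by_cases hac : a = c
          · subst hac
            have h1' : ¬ p <+: q := fun h => h1 (List.cons_prefix_cons.2 ⟨rfl, h⟩)
            have h2' : ¬ q <+: p := fun h => h2 (List.cons_prefix_cons.2 ⟨rfl, h⟩)
            obtain ⟨r, b, hb1, hb2⟩ := ih q h1' h2'
            exact ⟨a :: r, b, List.cons_prefix_cons.2 ⟨rfl, hb1⟩,
              List.cons_prefix_cons.2 ⟨rfl, hb2⟩⟩
          · refine ⟨[], a, ?_, ?_⟩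
            · exact List.cons_prefix_cons.2 ⟨rfl, List.nil_prefix⟩
            · have hc : (!a) = c := by cases a <;> cases c <;> simp_all
              exact List.cons_prefix_cons.2 ⟨hc, List.nil_prefix⟩

lemma Iv_disjoint {p q : BStr} (h1 : ¬ p <+: q) (h2 : ¬ q <+: p) :
    Disjoint (Iv p) (Iv q) := by
  obtain ⟨r, b, hp, hq⟩ := exists_split p q h1 h2
  cases b
  · exact (Iv_sib r).mono (Iv_prefix hp) (by simpa using Iv_prefix hq)
  · exact (Iv_sib r).symm.mono (Iv_prefix hp) (by simpa using Iv_prefix hq)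

lemma volume_Iv (p : BStr) : MeasureTheory.volume (Iv p) = (2 : ℝ≥0∞)⁻¹ ^ p.length := by
  rw [Iv, Real.volume_Ico, add_sub_cancel_left,
    ENNReal.ofReal_pow (by norm_num : (0:ℝ) ≤ 2⁻¹)]
  congr 1
  rw [ENNReal.ofReal_inv_of_pos (by norm_num : (0:ℝ) < 2)]
  norm_num

lemma Iv_empty : Iv ([] : BStr) = Set.Ico (0:ℝ) 1 := by
  rw [Iv, dy_nil]
  norm_num

lemma Iv_subset_unit (p : BStr) : Iv p ⊆ Set.Ico (0:ℝ) 1 := by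
  rw [← Iv_empty]
  exact Iv_prefix List.nil_prefix

lemma measurable_Iv (p : BStr) : MeasurableSet (Iv p) := measurableSet_Ico

end FlipAux

/-- the process terminates and the resulting z satisfies
M(z0) + M(z1) ≤ 2^{1-n}. -/
theorem flip_process_terminates (UM : Set (BStr × BStr)) (hUM : IsUniversalMonotone UM)
    (Mt : BStr → ℕ → ℚ) (hcomp : Computable₂ Mt)
    (hmono : ∀ x t, Mt x t ≤ Mt x (t + 1))
    (hlim : ∀ x, Tendsto (fun t => ENNReal.ofReal ((Mt x t : ℝ))) atTop (nhds (MM UM x)))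
    (n : ℕ) :
    ∃ N : ℕ, (pstep Mt n)^[N + 1] [] = (pstep Mt n)^[N] [] ∧
      ∀ N' : ℕ, (pstep Mt n)^[N' + 1] [] = (pstep Mt n)^[N'] [] →
        MM UM ((pstep Mt n)^[N'] [] ++ [false]) + MM UM ((pstep Mt n)^[N'] [] ++ [true]) ≤
          (2 : ℝ≥0∞) ^ ((1 : ℤ) - n) := by
  classical
  obtain ⟨⟨-, hmon⟩, -⟩ := hUM
  have hMtmono : ∀ x : BStr, Monotone (Mt x) := fun x => monotone_nat_of_le_succ (hmono x)
  have hMM_ge : ∀ (x : BStr) (t : ℕ), ENNReal.ofReal ((Mt x t : ℝ)) ≤ MM UM x := by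
    intro x t
    refine ge_of_tendsto (hlim x) ?_
    filter_upwards [eventually_ge_atTop t] with u hu
    exact ENNReal.ofReal_le_ofReal (by exact_mod_cast hMtmono x hu)
  have hδeq : ENNReal.ofReal (((((2:ℚ)^n)⁻¹ : ℚ) : ℝ)) = ((2:ℝ≥0∞)^n)⁻¹ := by
    push_cast
    rw [ENNReal.ofReal_inv_of_pos (by positivity), ENNReal.ofReal_pow (by norm_num)]
    norm_num
  -- Part 2 : any fixed point satisfies the bound
  have key2 : ∀ N' : ℕ, (pstep Mt n)^[N' + 1] [] = (pstep Mt n)^[N'] [] →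
      MM UM ((pstep Mt n)^[N'] [] ++ [false]) + MM UM ((pstep Mt n)^[N'] [] ++ [true]) ≤
        (2 : ℝ≥0∞) ^ ((1 : ℤ) - n) := by
    intro N' hfix
    rw [Function.iterate_succ_apply'] at hfix
    set w : BStr := (pstep Mt n)^[N'] [] with hw
    have hnex : ¬ ∃ k : ℕ, ((2:ℚ)^n)⁻¹ < Mt (w ++ [decide (k % 2 = 1)]) (k / 2) := by
      intro hexx
      have he : pstep Mt n w = w ++ [!(decide (Nat.find hexx % 2 = 1))] := dif_pos hexx
      rw [hfix] at he
      have := congrArg List.length he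
      simp at this
    push_neg at hnex
    have hble : ∀ (b : Bool) (t : ℕ), Mt (w ++ [b]) t ≤ ((2:ℚ)^n)⁻¹ := by
      intro b t
      have h := hnex (2 * t + b.toNat)
      have hb : decide ((2 * t + b.toNat) % 2 = 1) = b := by
        cases b <;> simp <;> omega
      have ht : (2 * t + b.toNat) / 2 = t := by cases b <;> simp <;> omega
      rw [hb, ht] at h
      exact h
    have hMMle : ∀ b : Bool, MM UM (w ++ [b]) ≤ ((2:ℝ≥0∞)^n)⁻¹ := by
      intro b
      rw [← hδeq]
      refine le_of_tendsto (hlim (w ++ [b])) ?_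
      filter_upwards with t
      exact ENNReal.ofReal_le_ofReal (by exact_mod_cast hble b t)
    calc MM UM (w ++ [false]) + MM UM (w ++ [true])
        ≤ ((2:ℝ≥0∞)^n)⁻¹ + ((2:ℝ≥0∞)^n)⁻¹ := add_le_add (hMMle false) (hMMle true)
      _ = 2 * ((2:ℝ≥0∞)^n)⁻¹ := (two_mul _).symm
      _ = (2 : ℝ≥0∞) ^ ((1 : ℤ) - n) := by
          rw [sub_eq_add_neg, ENNReal.zpow_add (by norm_num) (by norm_num)]
          simp [ENNReal.zpow_neg]
  -- Part 1 : termination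
  have key1 : ∃ N, (pstep Mt n)^[N+1] [] = (pstep Mt n)^[N] [] := by
    by_contra hc
    push_neg at hc
    set z : ℕ → BStr := fun N => (pstep Mt n)^[N] [] with hzdef
    have hzs : ∀ N, z (N+1) = pstep Mt n (z N) := fun N => Function.iterate_succ_apply' _ _ _
    have hcz : ∀ N, pstep Mt n (z N) ≠ z N := fun N => by
      rw [← hzs N]; exact hc N
    have hex : ∀ N, ∃ k : ℕ, ((2:ℚ)^n)⁻¹ < Mt (z N ++ [decide (k % 2 = 1)]) (k / 2) := by
      intro N
      by_contra hnex
      refine hcz N ?_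
      unfold pstep
      rw [dif_neg hnex]
    set b : ℕ → Bool := fun N => decide (Nat.find (hex N) % 2 = 1) with hbdef
    set y : ℕ → BStr := fun N => z N ++ [b N] with hydef
    have hstep : ∀ N, z (N+1) = z N ++ [!(b N)] := by
      intro N
      rw [hzs N]
      unfold pstep
      rw [dif_pos (hex N)]
    have hwit : ∀ N, ((2:ℚ)^n)⁻¹ < Mt (y N) (Nat.find (hex N) / 2) := fun N =>
      Nat.find_spec (hex N)
    have hlen : ∀ N, (z N).length = N := by
      intro N
      induction N with
      | zero => rfl
      | succ N ih => rw [hstep N]; simp [ih]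
    have hylen : ∀ N, (y N).length = N + 1 := by
      intro N
      rw [hydef]
      simp [hlen N]
    have hzmono : ∀ N M, N ≤ M → z N <+: z M := by
      intro N M h
      induction M, h using Nat.le_induction with
      | base => exact List.prefix_refl _
      | succ M hNM ih =>
          rw [hstep M]
          exact ih.trans (List.prefix_append _ _)
    have hinc' : ∀ A B, A < B → ∀ v : BStr, y A <+: v → y B <+: v → False := by
      intro A B hAB v h1 h2
      have hzB : z B <+: y B := List.prefix_append _ _
      have hp : z (A+1) <+: v := ((hzmono (A+1) B hAB).trans hzB).trans h2
      have hle : (y A).length ≤ (z (A+1)).length := by rw [hylen, hlen]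
      have heq : y A = z (A+1) :=
        (List.prefix_of_prefix_length_le h1 hp hle).eq_of_length (by rw [hylen, hlen])
      rw [hstep A] at heq
      have heq2 : z A ++ [b A] = z A ++ [!(b A)] := heq
      have := List.append_cancel_left heq2
      simp at this
    have hinc : ∀ A B, A ≠ B → ∀ v : BStr, y A <+: v → y B <+: v → False := by
      intro A B hAB v h1 h2
      rcases hAB.lt_or_gt with h | h
      · exact hinc' A B h v h1 h2
      · exact hinc' B A h v h2 h1
    have hMMgt : ∀ N, ((2:ℝ≥0∞)^n)⁻¹ < MM UM (y N) := by
      intro N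
      refine lt_of_lt_of_le ?_ (hMM_ge (y N) (Nat.find (hex N) / 2))
      rw [← hδeq]
      refine (ENNReal.ofReal_lt_ofReal_iff_of_nonneg (by positivity)).2 ?_
      exact_mod_cast hwit N
    have hMonPF : ∀ (v p q : BStr), MonOut UM p v → MonOut UM q v → p <+: q → p = q := by
      intro v p q hp hq hpq
      by_contra hne
      obtain ⟨x, hx, hvx⟩ := hp.1
      exact hq.2 p x hx hpq hne hvx
    have hFin : ∀ N, ∃ F : Finset BStr, (∀ p ∈ F, MonOut UM p (y N)) ∧
        ((2:ℝ≥0∞)^n)⁻¹ < ∑ p ∈ F, (2:ℝ≥0∞)⁻¹ ^ p.length := by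
      intro N
      have h := hMMgt N
      rw [MM, ENNReal.tsum_eq_iSup_sum, lt_iSup_iff] at h
      obtain ⟨s, hs⟩ := h
      refine ⟨s.image Subtype.val, ?_, ?_⟩
      · intro p hp
        obtain ⟨x, -, rfl⟩ := Finset.mem_image.1 hp
        exact x.2
      · rwa [Finset.sum_image (fun x _ u _ hxy => Subtype.val_injective hxy)]
    choose F hFmon hFgt using hFin
    set U : ℕ → Set ℝ := fun N => ⋃ p ∈ F N, FlipAux.Iv p with hUdef
    have hUmeas : ∀ N, MeasurableSet (U N) :=
      fun N => (F N).measurableSet_biUnion (fun p _ => FlipAux.measurable_Iv p)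
    have hUvol : ∀ N, ((2:ℝ≥0∞)^n)⁻¹ < MeasureTheory.volume (U N) := by
      intro N
      have hd : (↑(F N) : Set BStr).PairwiseDisjoint FlipAux.Iv := by
        intro p hp q hq hne
        refine FlipAux.Iv_disjoint ?_ ?_
        · exact fun h => hne (hMonPF (y N) p q (hFmon N p hp) (hFmon N q hq) h)
        · exact fun h => hne ((hMonPF (y N) q p (hFmon N q hq) (hFmon N p hp) h).symm)
      rw [hUdef]
      rw [MeasureTheory.measure_biUnion_finset hd (fun p _ => FlipAux.measurable_Iv p)]
      have : ∑ p ∈ F N, MeasureTheory.volume (FlipAux.Iv p)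
          = ∑ p ∈ F N, (2:ℝ≥0∞)⁻¹ ^ p.length :=
        Finset.sum_congr rfl (fun p _ => FlipAux.volume_Iv p)
      rw [this]
      exact hFgt N
    set V : ℕ → Set ℝ := fun K => ⋃ N, ⋃ (_ : K ≤ N), U N with hVdef
    have hVmeas : ∀ K, MeasurableSet (V K) :=
      fun K => MeasurableSet.iUnion fun N => MeasurableSet.iUnion fun _ => hUmeas N
    have hVanti : ∀ K K', K ≤ K' → V K' ⊆ V K := by
      intro K K' h x hx
      simp only [hVdef, Set.mem_iUnion] at hx ⊢
      obtain ⟨N, hN, hxN⟩ := hx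
      exact ⟨N, h.trans hN, hxN⟩
    have hVsub : ∀ K, V K ⊆ Set.Ico (0:ℝ) 1 := by
      intro K x hx
      simp only [hVdef, hUdef, Set.mem_iUnion] at hx
      obtain ⟨N, -, hx⟩ := hx
      obtain ⟨p, -, hx⟩ := hx
      exact FlipAux.Iv_subset_unit p hx
    have hUV : ∀ K, U K ⊆ V K := by
      intro K x hx
      simp only [hVdef, Set.mem_iUnion]
      exact ⟨K, le_refl K, hx⟩
    have hVvol : ∀ K, ((2:ℝ≥0∞)^n)⁻¹ < MeasureTheory.volume (V K) :=
      fun K => lt_of_lt_of_le (hUvol K) (MeasureTheory.measure_mono (hUV K))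
    have hVfin : MeasureTheory.volume (V 0) ≠ ⊤ := by
      refine ne_of_lt (lt_of_le_of_lt (MeasureTheory.measure_mono (hVsub 0)) ?_)
      rw [Real.volume_Ico]
      exact ENNReal.ofReal_lt_top
    have hiInter : MeasureTheory.volume (⋂ K, V K) = ⨅ K, MeasureTheory.volume (V K) := by
      refine Directed.measure_iInter (fun K => (hVmeas K).nullMeasurableSet)
        ?_ ⟨0, hVfin⟩
      intro K K'
      exact ⟨max K K', hVanti _ _ (le_max_left _ _), hVanti _ _ (le_max_right _ _)⟩
    have hGpos : ((2:ℝ≥0∞)^n)⁻¹ ≤ MeasureTheory.volume (⋂ K, V K) := by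
      rw [hiInter]
      exact le_iInf fun K => (hVvol K).le
    have hGne : (⋂ K, V K).Nonempty := by
      rcases Set.eq_empty_or_nonempty (⋂ K, V K) with h | h
      · exfalso
        rw [h] at hGpos
        simp only [MeasureTheory.measure_empty, le_zero_iff, ENNReal.inv_eq_zero] at hGpos
        exact ENNReal.pow_ne_top (by norm_num) hGpos
      · exact h
    obtain ⟨α, hα⟩ := hGne
    have hαV : ∀ K, ∃ N, K ≤ N ∧ ∃ p, p ∈ F N ∧ α ∈ FlipAux.Iv p := by
      intro K
      have h := Set.mem_iInter.1 hα K
      simp only [hVdef, hUdef, Set.mem_iUnion] at h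
      obtain ⟨N, hN, p, hpF, hpI⟩ := h
      exact ⟨N, hN, p, hpF, hpI⟩
    choose Nf hNfge P hPF hPI using hαV
    have hPmon : ∀ K, MonOut UM (P K) (y (Nf K)) := fun K => hFmon (Nf K) (P K) (hPF K)
    have hout : ∀ K, ∃ Wp, (P K, Wp) ∈ UM ∧ y (Nf K) <+: Wp := fun K => (hPmon K).1
    choose W hWmem hWpre using hout
    have hcmp : ∀ K K', P K <+: P K' ∨ P K' <+: P K := by
      intro K K'
      by_contra hno
      push_neg at hno
      exact Set.disjoint_left.1 (FlipAux.Iv_disjoint hno.1 hno.2) (hPI K) (hPI K')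
    have hD : ∀ K K', Nf K ≠ Nf K' → P K <+: P K' →
        (W K').length < (W K).length ∧ P K ≠ P K' := by
      intro K K' hne hpre
      have hlt : (W K').length < (W K).length := by
        by_contra hge
        push_neg at hge
        have h := hmon (P K) (W K) (P K') (W K') (hWmem K) (hWmem K') hge hpre
        exact hinc (Nf K) (Nf K') hne (W K') ((hWpre K).trans h) (hWpre K')
      refine ⟨hlt, ?_⟩
      intro heq
      have h := hmon (P K') (W K') (P K) (W K) (hWmem K') (hWmem K) hlt.le
        (heq ▸ List.prefix_refl (P K))
      exact hinc (Nf K') (Nf K) hne.symm (W K) ((hWpre K').trans h) (hWpre K)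
    set J : ℕ → ℕ := fun i => Nat.rec 0 (fun _ k => Nf k + 1) i with hJdef
    have hJs : ∀ i, J (i+1) = Nf (J i) + 1 := fun i => rfl
    have hMs : StrictMono (fun i => Nf (J i)) := by
      refine strictMono_nat_of_lt_succ ?_
      intro i
      calc Nf (J i) < Nf (J i) + 1 := Nat.lt_succ_self _
        _ = J (i+1) := (hJs i).symm
        _ ≤ Nf (J (i+1)) := hNfge _
    have hLge : ∀ i, i + 1 ≤ (W (J i)).length := by
      intro i
      have h1 : (y (Nf (J i))).length ≤ (W (J i)).length := (hWpre (J i)).length_le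
      rw [hylen] at h1
      have h2 : i ≤ Nf (J i) := hMs.le_apply
      omega
    set c := (P (J 0)).length with hcdef
    set Λ := (W (J 0)).length with hΛdef
    have hQpre : ∀ i, Λ ≤ i → P (J i) <+: P (J 0) ∧ (P (J i)).length < c := by
      intro i hi
      have hi1 : 1 ≤ i := le_trans (hLge 0) hi
      have hne : Nf (J i) ≠ Nf (J 0) := Nat.ne_of_gt (hMs (show (0:ℕ) < i from hi1))
      have hpre : P (J i) <+: P (J 0) := by
        rcases hcmp (J 0) (J i) with h | h
        · exfalso
          have hd1 := (hD (J 0) (J i) hne.symm h).1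
          have hd2 := hLge i
          omega
        · exact h
      have hneq : P (J i) ≠ P (J 0) := (hD (J i) (J 0) hne hpre).2
      refine ⟨hpre, lt_of_le_of_ne hpre.length_le ?_⟩
      intro h
      exact hneq (hpre.eq_of_length h)
    have hinj : Set.InjOn (fun i => (P (J i)).length) ↑(Finset.Icc Λ (Λ + c)) := by
      intro i hi j hj hij
      simp only [Finset.coe_Icc, Set.mem_Icc] at hi hj
      by_contra hne
      simp only at hij
      have hil := hQpre i hi.1
      have hjl := hQpre j hj.1
      have hPeq : P (J i) = P (J j) := by
        have h1 := List.prefix_of_prefix_length_le hil.1 hjl.1 (le_of_eq hij)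
        exact h1.eq_of_length hij
      have hNfne : Nf (J i) ≠ Nf (J j) := fun h => hne (hMs.injective h)
      exact (hD (J i) (J j) hNfne (hPeq ▸ List.prefix_refl (P (J i)))).2 hPeq
    have hcard := Finset.card_le_card_of_injOn (fun i => (P (J i)).length)
      (fun i hi => Finset.mem_range.2 (hQpre i (Finset.mem_Icc.1 hi).1).2) hinj
    rw [Nat.card_Icc, Finset.card_range] at hcard
    omega
  obtain ⟨N, hN⟩ := key1
  exact ⟨N, hN, key2⟩
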